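/- (Theorem 1, asymptotic form) Let σ > 0, let p be an even positive integer, let k be an even nonnegative integer, and let N be a nonnegative integer. Then, as ε → 0 from the right, ∫_ℝ p_G(x) x^k exp(−ε x^p) dx − Σ_{n=0}^{N} ((−ε)^n / n!) (np+k−1)!! σ^{np+k} = O(ε^{N+1}). That is, the series Σ_n ((−ε)^n/n!) (np+k−1)!! σ^{np+k} is an asymptotic expansion of μ_k / C(ε) as ε → 0⁺. -/

import Mathlib

open MeasureTheory Real Filter Topology Asymptotics

/-- The centered Gaussian density with standard deviation `σ`. -/
noncomputable def pG (σ x : ℝ) : ℝ :=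
  (1 / (Real.sqrt (2 * Real.pi) * σ)) * Real.exp (-x ^ 2 / (2 * σ ^ 2))



lemma integrable_pow_gauss {b : ℝ} (hb : 0 < b) (n : ℕ) :
    Integrable fun x : ℝ => x ^ n * Real.exp (-b * x ^ 2) := by
  have hn : (-1 : ℝ) < (n : ℝ) := lt_of_lt_of_le neg_one_lt_zero (Nat.cast_nonneg n)
  simpa [Real.rpow_natCast] using integrable_rpow_mul_exp_neg_mul_sq hb hn

lemma gauss_rec {b : ℝ} (hb : 0 < b) (j : ℕ) :
    ∫ x : ℝ, x ^ (j + 2) * Real.exp (-b * x ^ 2)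
      = ((j + 1 : ℝ) / (2 * b)) * ∫ x : ℝ, x ^ j * Real.exp (-b * x ^ 2) := by
  set F : ℝ → ℝ := fun x => x ^ (j + 1) * Real.exp (-b * x ^ 2) with hF
  set F' : ℝ → ℝ := fun x =>
    (j + 1 : ℝ) * (x ^ j * Real.exp (-b * x ^ 2))
      - (2 * b) * (x ^ (j + 2) * Real.exp (-b * x ^ 2)) with hF'
  have hderiv : ∀ x : ℝ, HasDerivAt F (F' x) x := by
    intro x
    have h1 : HasDerivAt (fun x : ℝ => x ^ (j + 1)) ((j + 1 : ℝ) * x ^ j) x := by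
      simpa using hasDerivAt_pow (j + 1) x
    have h2 : HasDerivAt (fun x : ℝ => Real.exp (-b * x ^ 2))
        (Real.exp (-b * x ^ 2) * (-b * (2 * x))) x := by
      have : HasDerivAt (fun x : ℝ => -b * x ^ 2) (-b * (2 * x)) x := by
        simpa using ((hasDerivAt_pow 2 x).const_mul (-b))
      exact this.exp
    have := h1.mul h2
    refine this.congr_deriv (Eq.symm ?_)
    simp only [hF']
    ring
  have hint : ∀ m : ℕ, Integrable fun x : ℝ => x ^ m * Real.exp (-b * x ^ 2) :=
    fun m => integrable_pow_gauss hb m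
  have hFint : Integrable F := hint (j + 1)
  have hF'int : Integrable F' := ((hint j).const_mul _).sub ((hint (j + 2)).const_mul _)
  have hzero : ∫ x, F' x = 0 :=
    integral_eq_zero_of_hasDerivAt_of_integrable hderiv hF'int hFint
  rw [hF'] at hzero
  rw [integral_sub ((hint j).const_mul _) ((hint (j + 2)).const_mul _),
    integral_const_mul, integral_const_mul] at hzero
  have h2b : (2 * b) ≠ 0 := by positivity
  rw [div_mul_eq_mul_div, eq_div_iff h2b]
  linarith [hzero]

lemma gauss_mom {b : ℝ} (hb : 0 < b) (m : ℕ) :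
    ∫ x : ℝ, x ^ (2 * m) * Real.exp (-b * x ^ 2)
      = (Nat.doubleFactorial (2 * m - 1) : ℝ) / (2 * b) ^ m * Real.sqrt (π / b) := by
  induction m with
  | zero => simpa using integral_gaussian b
  | succ m ih =>
    have h2 : 2 * (m + 1) = 2 * m + 2 := by ring
    rw [h2, gauss_rec hb (2 * m), ih]
    have hNat : Nat.doubleFactorial (2 * m + 2 - 1)
        = (2 * m + 1) * Nat.doubleFactorial (2 * m - 1) := by
      cases m with
      | zero => decide
      | succ m' =>
        have e1 : 2 * (m' + 1) + 2 - 1 = (2 * m' + 1) + 2 := by omega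
        have e2 : 2 * (m' + 1) + 1 = (2 * m' + 1) + 2 := by omega
        have e3 : 2 * (m' + 1) - 1 = 2 * m' + 1 := by omega
        rw [e1, e2, e3, Nat.doubleFactorial_add_two]
    have h2b : (2 * b) ≠ 0 := by positivity
    rw [hNat]
    set s := Real.sqrt (π / b)
    set D := (Nat.doubleFactorial (2 * m - 1) : ℝ)
    push_cast
    field_simp
    ring

lemma integrable_pG_pow (σ : ℝ) (hσ : 0 < σ) (j : ℕ) :
    Integrable fun x : ℝ => pG σ x * x ^ j := by
  have hb : (0:ℝ) < 1/(2*σ^2) := by positivity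
  have h := (integrable_pow_gauss hb j).const_mul (1/(Real.sqrt (2*π)*σ))
  refine h.congr (Filter.Eventually.of_forall fun x => ?_)
  have harg : -x^2/(2*σ^2) = -(1/(2*σ^2)) * x^2 := by ring
  simp only [pG, harg]
  ring

lemma pG_mom (σ : ℝ) (hσ : 0 < σ) (m : ℕ) :
    ∫ x : ℝ, pG σ x * x ^ (2 * m)
      = (Nat.doubleFactorial (2 * m - 1) : ℝ) * σ ^ (2 * m) := by
  have hb : (0:ℝ) < 1/(2*σ^2) := by positivity
  have hrw : ∀ x : ℝ, pG σ x * x ^ (2*m)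
      = (1/(Real.sqrt (2*π)*σ)) * (x ^ (2*m) * Real.exp (-(1/(2*σ^2)) * x^2)) := by
    intro x
    have harg : -x^2/(2*σ^2) = -(1/(2*σ^2)) * x^2 := by ring
    simp only [pG, harg]
    ring
  simp only [hrw]
  rw [integral_const_mul, gauss_mom hb m]
  have h1 : 2 * (1/(2*σ^2)) = (σ^2)⁻¹ := by field_simp
  have h2 : π / (1/(2*σ^2)) = 2*π*σ^2 := by field_simp
  rw [h1, h2]
  have h3 : Real.sqrt (2*π*σ^2) = Real.sqrt (2*π) * σ := by
    rw [Real.sqrt_mul (by positivity), Real.sqrt_sq hσ.le]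
  rw [h3]
  have hs : Real.sqrt (2*π) ≠ 0 := by positivity
  have hσ' : σ ≠ 0 := ne_of_gt hσ
  rw [pow_mul]
  field_simp
  rw [← mul_pow, one_div, inv_mul_cancel₀ (pow_ne_zero 2 hσ'), one_pow]

noncomputable def expS (N : ℕ) (t : ℝ) : ℝ :=
  ∑ n ∈ Finset.range N, (-1) ^ n * t ^ n / (n.factorial : ℝ)

lemma expS_succ_zero (N : ℕ) : expS (N + 1) 0 = 1 := by
  rw [expS, Finset.sum_range_succ']
  simp

lemma hasDerivAt_expS (N : ℕ) (t : ℝ) : HasDerivAt (expS (N + 1)) (-(expS N t)) t := by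
  have h : ∀ n ∈ Finset.range (N + 1), HasDerivAt (fun t : ℝ => (-1) ^ n * t ^ n / (n.factorial : ℝ))
      ((-1) ^ n * ((n : ℝ) * t ^ (n - 1)) / (n.factorial : ℝ)) t := by
    intro n _
    exact ((hasDerivAt_pow n t).const_mul ((-1 : ℝ) ^ n)).div_const _
  have := HasDerivAt.fun_sum h
  refine this.congr_deriv (Eq.symm ?_)
  rw [Finset.sum_range_succ']
  simp only [Nat.cast_zero, pow_zero, zero_mul, mul_zero, zero_div, add_zero]
  rw [expS, ← Finset.sum_neg_distrib]
  refine Finset.sum_congr rfl fun i _ => ?_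
  have hfac : ((i + 1).factorial : ℝ) = (i + 1 : ℝ) * (i.factorial : ℝ) := by
    rw [Nat.factorial_succ]; push_cast; ring
  have hne : (i.factorial : ℝ) ≠ 0 := Nat.cast_ne_zero.mpr (Nat.factorial_ne_zero i)
  have hne1 : (i + 1 : ℝ) ≠ 0 := by positivity
  rw [hfac]
  simp only [Nat.add_sub_cancel, Nat.cast_add, Nat.cast_one, pow_succ]
  field_simp

lemma nonneg_of_deriv {f g : ℝ → ℝ} (hd : ∀ t, HasDerivAt f (g t) t) (h0 : f 0 = 0)
    (hg : ∀ t, 0 ≤ t → 0 ≤ g t) {t : ℝ} (ht : 0 ≤ t) : 0 ≤ f t := by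
  have hmono : MonotoneOn f (Set.Ici (0 : ℝ)) := by
    refine monotoneOn_of_deriv_nonneg (convex_Ici 0)
      (Continuous.continuousOn ?_) ?_ ?_
    · exact (fun x => (hd x).differentiableAt) |> Differentiable.continuous
    · exact fun x _ => ((hd x).differentiableAt).differentiableWithinAt
    · intro x hx
      rw [(hd x).deriv]
      rw [interior_Ici] at hx
      exact hg x (le_of_lt hx)
  have := hmono (Set.self_mem_Ici) (Set.mem_Ici.mpr ht) ht
  rwa [h0] at this

lemma expS_bounds (N : ℕ) : ∀ t : ℝ, 0 ≤ t →
    0 ≤ (-1) ^ N * (Real.exp (-t) - expS N t) ∧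
      (-1) ^ N * (Real.exp (-t) - expS N t) ≤ t ^ N / (N.factorial : ℝ) := by
  induction N with
  | zero =>
    intro t ht
    simp only [pow_zero, one_mul, expS, Finset.range_zero, Finset.sum_empty, sub_zero,
      Nat.factorial_zero, Nat.cast_one, div_one]
    exact ⟨(Real.exp_pos _).le, Real.exp_le_one_iff.mpr (neg_nonpos.mpr ht)⟩
  | succ N ih =>
    have hder : ∀ t : ℝ, HasDerivAt (fun t => (-1 : ℝ) ^ (N + 1) * (Real.exp (-t) - expS (N + 1) t))
        ((-1) ^ N * (Real.exp (-t) - expS N t)) t := by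
      intro t
      have h1 : HasDerivAt (fun t : ℝ => Real.exp (-t)) (Real.exp (-t) * (-1)) t :=
        (hasDerivAt_neg t).exp
      have h2 := (h1.sub (hasDerivAt_expS N t)).const_mul ((-1 : ℝ) ^ (N + 1))
      refine h2.congr_deriv (Eq.symm ?_)
      ring
    have hzero : (-1 : ℝ) ^ (N + 1) * (Real.exp (-(0:ℝ)) - expS (N + 1) 0) = 0 := by
      simp [expS_succ_zero]
    intro t ht
    constructor
    · exact nonneg_of_deriv hder hzero (fun s hs => (ih s hs).1) ht
    · have hder2 : ∀ t : ℝ, HasDerivAt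
          (fun t => t ^ (N + 1) / ((N + 1).factorial : ℝ)
            - (-1 : ℝ) ^ (N + 1) * (Real.exp (-t) - expS (N + 1) t))
          (t ^ N / (N.factorial : ℝ) - (-1) ^ N * (Real.exp (-t) - expS N t)) t := by
        intro t
        have h1 : HasDerivAt (fun t : ℝ => t ^ (N + 1) / ((N + 1).factorial : ℝ))
            (t ^ N / (N.factorial : ℝ)) t := by
          have := (hasDerivAt_pow (N + 1) t).div_const (((N + 1).factorial : ℝ))
          refine this.congr_deriv (Eq.symm ?_)
          have hfac : ((N + 1).factorial : ℝ) = (N + 1 : ℝ) * (N.factorial : ℝ) := by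
            rw [Nat.factorial_succ]; push_cast; ring
          rw [hfac]
          have hne : (N.factorial : ℝ) ≠ 0 := Nat.cast_ne_zero.mpr (Nat.factorial_ne_zero N)
          have hne1 : (N + 1 : ℝ) ≠ 0 := by positivity
          simp only [Nat.add_sub_cancel, Nat.cast_add, Nat.cast_one]
          field_simp
        exact h1.sub (hder t)
      have h0' : (0:ℝ) ^ (N + 1) / ((N + 1).factorial : ℝ)
          - (-1 : ℝ) ^ (N + 1) * (Real.exp (-(0:ℝ)) - expS (N + 1) 0) = 0 := by
        simp [expS_succ_zero]
      have := nonneg_of_deriv hder2 h0'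
        (fun s hs => sub_nonneg.mpr (ih s hs).2) ht
      linarith
    
lemma abs_exp_sub_expS (N : ℕ) {t : ℝ} (ht : 0 ≤ t) :
    |Real.exp (-t) - expS (N + 1) t| ≤ t ^ (N + 1) / ((N + 1).factorial : ℝ) := by
  obtain ⟨h1, h2⟩ := expS_bounds (N + 1) t ht
  rcases Nat.even_or_odd (N + 1) with he | ho
  · rw [he.neg_one_pow, one_mul] at h1 h2
    rw [abs_le]
    constructor
    · refine le_trans ?_ h1
      simp only [neg_nonpos]
      positivity
    · exact h2
  · rw [ho.neg_one_pow, neg_one_mul, neg_nonneg] at h1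
    rw [ho.neg_one_pow, neg_one_mul, neg_le] at h2
    rw [abs_le]
    exact ⟨h2, le_trans h1 (by positivity)⟩


theorem stmt4 (σ : ℝ) (hσ : 0 < σ) (p : ℕ) (hp : 0 < p) (hpe : Even p)
    (k : ℕ) (hk : Even k) (N : ℕ) :
    (fun ε : ℝ =>
        (∫ x : ℝ, pG σ x * x ^ k * Real.exp (-ε * x ^ p)) -
          ∑ n ∈ Finset.range (N + 1),
            (-ε) ^ n / (n.factorial : ℝ) *
              (Nat.doubleFactorial (n * p + k - 1) : ℝ) * σ ^ (n * p + k))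
      =O[𝓝[>] (0 : ℝ)] fun ε => ε ^ (N + 1) := by

  rw [Asymptotics.isBigO_iff]
  refine ⟨(Nat.doubleFactorial ((N + 1) * p + k - 1) : ℝ) * σ ^ ((N + 1) * p + k)
      / (((N + 1).factorial : ℝ)), ?_⟩
  filter_upwards [self_mem_nhdsWithin] with ε hε
  have hε' : (0 : ℝ) < ε := hε
  have heven : ∀ n : ℕ, Even (n * p + k) := fun n => (hpe.mul_left n).add hk
  have hmom : ∀ j : ℕ, Even j → (∫ x : ℝ, pG σ x * x ^ j)
      = (Nat.doubleFactorial (j - 1) : ℝ) * σ ^ j := by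
    intro j hj
    obtain ⟨m, rfl⟩ := hj
    have h2m : m + m = 2 * m := (two_mul m).symm
    rw [h2m, pG_mom σ hσ m]
  have hpG : ∀ x : ℝ, 0 ≤ pG σ x := by
    intro x
    unfold pG
    positivity
  have hxk : ∀ x : ℝ, 0 ≤ x ^ k := fun x => hk.pow_nonneg x
  have hxp : ∀ x : ℝ, 0 ≤ x ^ p := fun x => hpe.pow_nonneg x
  have hpt : ∀ x : ℝ, pG σ x * x ^ k * expS (N + 1) (ε * x ^ p)
      = ∑ n ∈ Finset.range (N + 1),
          ((-ε) ^ n / (n.factorial : ℝ)) * (pG σ x * x ^ (n * p + k)) := by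
    intro x
    rw [expS, Finset.mul_sum]
    refine Finset.sum_congr rfl fun n _ => ?_
    have hx : x ^ (n * p + k) = (x ^ p) ^ n * x ^ k := by
      rw [pow_add, mul_comm n p, pow_mul]
    rw [hx, neg_pow, mul_pow]
    ring
  have hsum : (∑ n ∈ Finset.range (N + 1),
        (-ε) ^ n / (n.factorial : ℝ) * (Nat.doubleFactorial (n * p + k - 1) : ℝ)
          * σ ^ (n * p + k))
      = ∫ x : ℝ, pG σ x * x ^ k * expS (N + 1) (ε * x ^ p) := by
    have step1 : ∀ n ∈ Finset.range (N + 1),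
        (-ε) ^ n / (n.factorial : ℝ) * (Nat.doubleFactorial (n * p + k - 1) : ℝ)
            * σ ^ (n * p + k)
          = ∫ x : ℝ, ((-ε) ^ n / (n.factorial : ℝ)) * (pG σ x * x ^ (n * p + k)) := by
      intro n _
      rw [integral_const_mul, hmom _ (heven n)]
      ring
    rw [Finset.sum_congr rfl step1,
      ← integral_finset_sum _ (fun n _ => ((integrable_pG_pow σ hσ (n * p + k)).const_mul _))]
    exact integral_congr_ae (Filter.Eventually.of_forall fun x => (hpt x).symm)
  have hintA : Integrable (fun x : ℝ => pG σ x * x ^ k * Real.exp (-ε * x ^ p)) := by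
    refine (integrable_pG_pow σ hσ k).mono' ?_ (Filter.Eventually.of_forall fun x => ?_)
    · apply Continuous.aestronglyMeasurable
      unfold pG
      fun_prop
    · have h0 : 0 ≤ pG σ x * x ^ k * Real.exp (-ε * x ^ p) :=
        mul_nonneg (mul_nonneg (hpG x) (hxk x)) (Real.exp_pos _).le
      rw [Real.norm_eq_abs, abs_of_nonneg h0]
      have : Real.exp (-ε * x ^ p) ≤ 1 := by
        apply Real.exp_le_one_iff.mpr
        have := mul_nonneg hε'.le (hxp x)
        nlinarith
      nlinarith [mul_nonneg (hpG x) (hxk x)]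
  have hintB : Integrable (fun x : ℝ => pG σ x * x ^ k * expS (N + 1) (ε * x ^ p)) := by
    have h := integrable_finset_sum (Finset.range (N + 1))
      (fun n _ => ((integrable_pG_pow σ hσ (n * p + k)).const_mul ((-ε) ^ n / (n.factorial : ℝ))))
    exact h.congr (Filter.Eventually.of_forall fun x => (hpt x).symm)
  show _ ≤ _
  rw [hsum, ← integral_sub hintA hintB]
  have hbound : ∀ x : ℝ,
      ‖pG σ x * x ^ k * Real.exp (-ε * x ^ p) - pG σ x * x ^ k * expS (N + 1) (ε * x ^ p)‖
        ≤ (ε ^ (N + 1) / ((N + 1).factorial : ℝ)) * (pG σ x * x ^ ((N + 1) * p + k)) := by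
    intro x
    rw [← mul_sub, Real.norm_eq_abs, abs_mul,
      abs_of_nonneg (mul_nonneg (hpG x) (hxk x))]
    have ht : 0 ≤ ε * x ^ p := mul_nonneg hε'.le (hxp x)
    have h2 : -ε * x ^ p = -(ε * x ^ p) := by ring
    rw [h2]
    have h3 := abs_exp_sub_expS N ht
    calc pG σ x * x ^ k * |Real.exp (-(ε * x ^ p)) - expS (N + 1) (ε * x ^ p)|
        ≤ pG σ x * x ^ k * ((ε * x ^ p) ^ (N + 1) / ((N + 1).factorial : ℝ)) :=
          mul_le_mul_of_nonneg_left h3 (mul_nonneg (hpG x) (hxk x))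
      _ = (ε ^ (N + 1) / ((N + 1).factorial : ℝ)) * (pG σ x * x ^ ((N + 1) * p + k)) := by
          have hx : x ^ ((N + 1) * p + k) = (x ^ p) ^ (N + 1) * x ^ k := by
            rw [pow_add, mul_comm (N + 1) p, pow_mul]
          rw [hx, mul_pow]
          ring
  have hint2 : Integrable (fun x : ℝ =>
      (ε ^ (N + 1) / ((N + 1).factorial : ℝ)) * (pG σ x * x ^ ((N + 1) * p + k))) :=
    (integrable_pG_pow σ hσ _).const_mul _
  have := norm_integral_le_of_norm_le hint2 (Filter.Eventually.of_forall hbound)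
  refine le_trans this ?_
  rw [integral_const_mul, hmom _ (heven (N + 1)), Real.norm_eq_abs,
    abs_of_pos (pow_pos hε' (N + 1))]
  rw [div_mul_eq_mul_div]
  apply le_of_eq
  ring
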